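/- arXiv:1411.5995 — 2 statements merged into one kernel-verified Lean document; each statement's English description precedes it below -/
import Mathlib

section
/- Let F and B be n × n column-stochastic matrices, let 0 < α₁, α₂, α₃ < 1, and let d ∈ ℝⁿ. Then there exists a vector t ∈ ℝⁿ satisfying the RepRank equation t = α₁ F P₊(t) + α₂ B P₋(t) + α₃ d. -/
open Finset Filter

/-- Replace negative components by zero. -/
def Ppos {n : ℕ} (t : Fin n → ℝ) : Fin n → ℝ := fun i => max (t i) 0

/-- Replace positive components by zero. -/
def Pneg {n : ℕ} (t : Fin n → ℝ) : Fin n → ℝ := fun i => min (t i) 0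

/-- ℓ¹ norm on ℝⁿ. -/
def l1 {n : ℕ} (x : Fin n → ℝ) : ℝ := ∑ i, |x i|

/-- A matrix is column-stochastic if entries are nonnegative and each column sums to 1. -/
def ColStochastic {n : ℕ} (F : Matrix (Fin n) (Fin n) ℝ) : Prop :=
  (∀ i j, 0 ≤ F i j) ∧ ∀ j, ∑ i, F i j = 1

lemma stoch_l1 {n : ℕ} {F : Matrix (Fin n) (Fin n) ℝ} (hF : ColStochastic F)
    (x : Fin n → ℝ) : ∑ i, |F.mulVec x i| ≤ ∑ i, |x i| := by
  simp only [Matrix.mulVec, dotProduct]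
  calc ∑ i, |∑ j, F i j * x j| ≤ ∑ i, ∑ j, F i j * |x j| := by
        refine Finset.sum_le_sum fun i _ => ?_
        refine (Finset.abs_sum_le_sum_abs _ _).trans ?_
        refine Finset.sum_le_sum fun j _ => ?_
        rw [abs_mul, abs_of_nonneg (hF.1 i j)]
    _ = ∑ j, (∑ i, F i j) * |x j| := by
        rw [Finset.sum_comm]; simp [Finset.sum_mul]
    _ = ∑ j, |x j| := by simp [hF.2]

lemma pm_key (a b : ℝ) : |max a 0 - max b 0| + |min a 0 - min b 0| = |a - b| := by
  rcases le_total a 0 with ha | ha <;> rcases le_total b 0 with hb | hb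
  · rw [max_eq_right ha, max_eq_right hb, min_eq_left ha, min_eq_left hb]; simp
  · rw [max_eq_right ha, max_eq_left hb, min_eq_left ha, min_eq_right hb,
      abs_of_nonpos (by linarith), abs_of_nonpos (by linarith),
      abs_of_nonpos (by linarith)]; ring
  · rw [max_eq_left ha, max_eq_right hb, min_eq_right ha, min_eq_left hb,
      abs_of_nonneg (by linarith), abs_of_nonneg (by linarith),
      abs_of_nonneg (by linarith)]; ring
  · rw [max_eq_left ha, max_eq_left hb, min_eq_right ha, min_eq_right hb]; simp

set_option maxHeartbeats 1000000 in
theorem repRank_exists {n : ℕ} (F B : Matrix (Fin n) (Fin n) ℝ)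
    (hF : ColStochastic F) (hB : ColStochastic B)
    (α₁ α₂ α₃ : ℝ) (hα₁ : 0 < α₁) (hα₁' : α₁ < 1) (hα₂ : 0 < α₂) (hα₂' : α₂ < 1)
    (hα₃ : 0 < α₃) (hα₃' : α₃ < 1) (d : Fin n → ℝ) :
    ∃ t : Fin n → ℝ, t = α₁ • F.mulVec (Ppos t) + α₂ • B.mulVec (Pneg t) + α₃ • d := by
  set K : ℝ := max α₁ α₂ with hK
  have hK0 : 0 ≤ K := le_max_of_le_left hα₁.le
  have hK1 : K < 1 := max_lt hα₁' hα₂'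
  let E := PiLp 1 (fun _ : Fin n => ℝ)
  let f : E → E := fun t => WithLp.toLp 1 (α₁ • F.mulVec (Ppos t) + α₂ • B.mulVec (Pneg t) + α₃ • d)
  have hdist : ∀ x y : E, dist x y = ∑ i, |x i - y i| := by
    intro x y
    rw [PiLp.dist_eq_sum (by norm_num)]
    simp [Real.dist_eq]
  have hlip : ∀ x y : E, dist (f x) (f y) ≤ K * dist x y := by
    intro x y
    rw [hdist, hdist]
    have hfsub : (f x).ofLp - (f y).ofLp =
        α₁ • (F.mulVec (Ppos x - Ppos y)) + α₂ • (B.mulVec (Pneg x - Pneg y)) := by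
      simp only [f, Matrix.mulVec_sub, smul_sub]; abel
    calc ∑ i, |f x i - f y i|
        = ∑ i, |α₁ * (F.mulVec (Ppos x - Ppos y)) i + α₂ * (B.mulVec (Pneg x - Pneg y)) i| := by
          refine Finset.sum_congr rfl fun i _ => ?_
          have := congrFun hfsub i
          simp only [Pi.sub_apply, Pi.add_apply, Pi.smul_apply, smul_eq_mul] at this
          rw [← this]
      _ ≤ ∑ i, (α₁ * |(F.mulVec (Ppos x - Ppos y)) i| + α₂ * |(B.mulVec (Pneg x - Pneg y)) i|) := by
          refine Finset.sum_le_sum fun i _ => ?_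
          refine (abs_add_le _ _).trans ?_
          rw [abs_mul, abs_mul, abs_of_nonneg hα₁.le, abs_of_nonneg hα₂.le]
      _ = α₁ * ∑ i, |(F.mulVec (Ppos x - Ppos y)) i| + α₂ * ∑ i, |(B.mulVec (Pneg x - Pneg y)) i| := by
          rw [Finset.sum_add_distrib, Finset.mul_sum, Finset.mul_sum]
      _ ≤ K * ∑ i, |(Ppos x - Ppos y) i| + K * ∑ i, |(Pneg x - Pneg y) i| := by
          have h1 : α₁ * ∑ i, |(F.mulVec (Ppos x - Ppos y)) i| ≤ K * ∑ i, |(Ppos x - Ppos y) i| :=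
            mul_le_mul (le_max_left _ _) (stoch_l1 hF _)
              (Finset.sum_nonneg fun i _ => abs_nonneg _) hK0
          have h2 : α₂ * ∑ i, |(B.mulVec (Pneg x - Pneg y)) i| ≤ K * ∑ i, |(Pneg x - Pneg y) i| :=
            mul_le_mul (le_max_right _ _) (stoch_l1 hB _)
              (Finset.sum_nonneg fun i _ => abs_nonneg _) hK0
          exact add_le_add h1 h2
      _ = K * ∑ i, (|Ppos x i - Ppos y i| + |Pneg x i - Pneg y i|) := by
          simp only [Pi.sub_apply]; rw [Finset.sum_add_distrib]; ring
      _ = K * ∑ i, |x i - y i| := by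
          congr 1
          exact Finset.sum_congr rfl fun i _ => pm_key (x i) (y i)
  have hcontr : ContractingWith ⟨K, hK0⟩ f := by
    constructor
    · exact_mod_cast hK1
    · exact LipschitzWith.of_dist_le_mul hlip
  have : Nonempty E := ⟨0⟩
  obtain ⟨t, ht⟩ : ∃ t : E, f t = t := ⟨_, hcontr.fixedPoint_isFixedPt⟩
  exact ⟨t, (congrArg WithLp.ofLp ht).symm⟩
end

section
/- Let F and B be n × n column-stochastic matrices, let 0 < α₁, α₂, α₃ < 1, and let t be the unique solution of the RepRank equation t = α₁ F P₊(t) + α₂ B P₋(t) + α₃ d for a given d ∈ ℝⁿ. Then for any d₁, d₂ ∈ ℝⁿ with corresponding solutions t₁ = R(d₁) and t₂ = R(d₂), one has ‖t₁ − t₂‖₁ ≤ max(α₁, α₂) ‖t₁ − t₂‖₁ + α₃ ‖d₁ − d₂‖₁. -/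
open Finset Filter

lemma l1_nonneg {n : ℕ} (x : Fin n → ℝ) : 0 ≤ l1 x :=
  Finset.sum_nonneg fun i _ => abs_nonneg _

lemma l1_add_le {n : ℕ} (x y : Fin n → ℝ) : l1 (x + y) ≤ l1 x + l1 y := by
  unfold l1
  rw [← Finset.sum_add_distrib]
  exact Finset.sum_le_sum fun i _ => abs_add_le _ _

lemma l1_smul {n : ℕ} (c : ℝ) (hc : 0 ≤ c) (x : Fin n → ℝ) : l1 (c • x) = c * l1 x := by
  unfold l1
  rw [Finset.mul_sum]
  refine Finset.sum_congr rfl fun i _ => ?_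
  simp [abs_mul, abs_of_nonneg hc]

lemma l1_mulVec_le {n : ℕ} {F : Matrix (Fin n) (Fin n) ℝ} (hF : ColStochastic F)
    (x : Fin n → ℝ) : l1 (F.mulVec x) ≤ l1 x := by
  unfold l1 Matrix.mulVec dotProduct
  calc ∑ i, |∑ j, F i j * x j| ≤ ∑ i, ∑ j, |F i j * x j| :=
        Finset.sum_le_sum fun i _ => Finset.abs_sum_le_sum_abs _ _
    _ = ∑ j, (∑ i, F i j) * |x j| := by
        rw [Finset.sum_comm]
        refine Finset.sum_congr rfl fun j _ => ?_
        rw [Finset.sum_mul]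
        refine Finset.sum_congr rfl fun i _ => ?_
        rw [abs_mul, abs_of_nonneg (hF.1 i j)]
    _ = ∑ j, |x j| := Finset.sum_congr rfl fun j _ => by rw [hF.2 j, one_mul]

lemma l1_split {n : ℕ} (a b : Fin n → ℝ) :
    l1 (Ppos a - Ppos b) + l1 (Pneg a - Pneg b) = l1 (a - b) := by
  unfold l1 Ppos Pneg
  rw [← Finset.sum_add_distrib]
  refine Finset.sum_congr rfl fun i _ => ?_
  simp only [Pi.sub_apply]
  rcases le_total (a i) 0 with ha | ha <;> rcases le_total (b i) 0 with hb | hb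
  · rw [max_eq_right ha, max_eq_right hb, min_eq_left ha, min_eq_left hb]; simp
  · rw [max_eq_right ha, max_eq_left hb, min_eq_left ha, min_eq_right hb,
      zero_sub, sub_zero, abs_neg, abs_of_nonneg hb, abs_of_nonpos ha,
      abs_of_nonpos (by linarith : a i - b i ≤ 0)]; ring
  · rw [max_eq_left ha, max_eq_right hb, min_eq_right ha, min_eq_left hb,
      sub_zero, zero_sub, abs_neg, abs_of_nonneg ha, abs_of_nonpos hb,
      abs_of_nonneg (by linarith : 0 ≤ a i - b i)]; ring
  · rw [max_eq_left ha, max_eq_left hb, min_eq_right ha, min_eq_right hb]; simp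

theorem repRank_stability_inequality {n : ℕ} (F B : Matrix (Fin n) (Fin n) ℝ)
    (hF : ColStochastic F) (hB : ColStochastic B)
    (α₁ α₂ α₃ : ℝ) (hα₁ : 0 < α₁) (hα₁' : α₁ < 1) (hα₂ : 0 < α₂) (hα₂' : α₂ < 1)
    (hα₃ : 0 < α₃) (hα₃' : α₃ < 1)
    (d₁ d₂ t₁ t₂ : Fin n → ℝ)
    (ht₁ : t₁ = α₁ • F.mulVec (Ppos t₁) + α₂ • B.mulVec (Pneg t₁) + α₃ • d₁)
    (ht₂ : t₂ = α₁ • F.mulVec (Ppos t₂) + α₂ • B.mulVec (Pneg t₂) + α₃ • d₂) :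
    l1 (t₁ - t₂) ≤ max α₁ α₂ * l1 (t₁ - t₂) + α₃ * l1 (d₁ - d₂) := by
  have key : t₁ - t₂ = α₁ • F.mulVec (Ppos t₁ - Ppos t₂) + α₂ • B.mulVec (Pneg t₁ - Pneg t₂)
      + α₃ • (d₁ - d₂) := by
    conv_lhs => rw [ht₁, ht₂]
    rw [Matrix.mulVec_sub, Matrix.mulVec_sub]
    module
  have h1 : l1 (t₁ - t₂) ≤ α₁ * l1 (Ppos t₁ - Ppos t₂) + α₂ * l1 (Pneg t₁ - Pneg t₂)
      + α₃ * l1 (d₁ - d₂) := by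
    rw [key]
    calc l1 _ ≤ l1 (α₁ • F.mulVec (Ppos t₁ - Ppos t₂) + α₂ • B.mulVec (Pneg t₁ - Pneg t₂))
        + l1 (α₃ • (d₁ - d₂)) := l1_add_le _ _
      _ ≤ l1 (α₁ • F.mulVec (Ppos t₁ - Ppos t₂)) + l1 (α₂ • B.mulVec (Pneg t₁ - Pneg t₂))
        + l1 (α₃ • (d₁ - d₂)) := by gcongr; exact l1_add_le _ _
      _ = α₁ * l1 (F.mulVec (Ppos t₁ - Ppos t₂)) + α₂ * l1 (B.mulVec (Pneg t₁ - Pneg t₂))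
        + α₃ * l1 (d₁ - d₂) := by
          rw [l1_smul _ hα₁.le, l1_smul _ hα₂.le, l1_smul _ hα₃.le]
      _ ≤ _ := by
          gcongr
          · exact l1_mulVec_le hF _
          · exact l1_mulVec_le hB _
  have h2 : α₁ * l1 (Ppos t₁ - Ppos t₂) + α₂ * l1 (Pneg t₁ - Pneg t₂)
      ≤ max α₁ α₂ * l1 (t₁ - t₂) := by
    rw [← l1_split t₁ t₂, mul_add]
    gcongr
    · exact l1_nonneg _
    · exact le_max_left _ _
    · exact l1_nonneg _
    · exact le_max_right _ _
  linarith
end
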